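/- For all integers a ≥ 2, b ≥ 0 and every integer k with 1 ≤ k ≤ a−1, one has t(a,b) = t(a−k, b+k). -/

import Mathlib

open MvPolynomial

/-- The set `T(a,b)` of pairs `(J, L)` of nonzero homogeneous polynomials in `F[X,Y]`
of degrees `a` and `b` respectively, which are relatively prime (every common divisor
is a unit) and such that `X` does not divide `J`. -/
def wplT (F : Type*) [Field F] (a b : ℕ) :
    Set (MvPolynomial (Fin 2) F × MvPolynomial (Fin 2) F) :=
  {P | P.1 ≠ 0 ∧ P.2 ≠ 0 ∧ P.1.IsHomogeneous a ∧ P.2.IsHomogeneous b ∧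
    IsRelPrime P.1 P.2 ∧ ¬ (X 0 ∣ P.1)}

namespace WplAux
open Polynomial Finset

variable (F : Type*) [Field F] [Fintype F]

/-- polynomials of degree < n -/
def Dset (n : ℕ) : Set (Polynomial F) := {p | p.degree < (n : ℕ)}
/-- polynomials of degree exactly n -/
def Wset (n : ℕ) : Set (Polynomial F) := {p | p.degree = (n : ℕ)}
/-- the univariate model of T(a,b) -/
def Nset (a b : ℕ) : Set (Polynomial F × Polynomial F) :=
  {p | p.1.degree = (a : ℕ) ∧ p.2 ≠ 0 ∧ p.2.degree ≤ (b : ℕ) ∧ IsCoprime p.1 p.2}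
/-- pairs with exact degrees, coprime -/
def Mset (a c : ℕ) : Set (Polynomial F × Polynomial F) :=
  {p | p.1.degree = (a : ℕ) ∧ p.2.degree = (c : ℕ) ∧ IsCoprime p.1 p.2}

variable {F}

omit [Fintype F] in
lemma Dset_eq (n : ℕ) : Dset F n = (Polynomial.degreeLT F n : Set (Polynomial F)) := by
  ext p; simp [Dset, Polynomial.mem_degreeLT]

noncomputable instance (n : ℕ) : Fintype (Dset F n) := by
  rw [Dset_eq]
  exact Fintype.ofEquiv _ (degreeLTEquiv F n).toEquiv.symm

lemma Dset_finite (n : ℕ) : (Dset F n).Finite := Set.toFinite _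

lemma card_Dset (n : ℕ) : (Dset F n).ncard = Fintype.card F ^ n := by
  rw [← Nat.card_coe_set_eq, Nat.card_eq_fintype_card]
  rw [Fintype.card_congr ((Equiv.setCongr (Dset_eq n)).trans (degreeLTEquiv F n).toEquiv)]
  simp

omit [Fintype F] in
lemma Wset_subset (n : ℕ) : Wset F n ⊆ Dset F (n+1) := by
  intro p hp
  simp only [Wset, Set.mem_setOf_eq] at hp
  simp only [Dset, Set.mem_setOf_eq, hp]
  exact_mod_cast WithBot.coe_lt_coe.2 (Nat.lt_succ_self n)

lemma Wset_finite (n : ℕ) : (Wset F n).Finite := (Dset_finite (n+1)).subset (Wset_subset n)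

lemma withbot_lt_succ_iff {x : WithBot ℕ} {n : ℕ} :
    x < ((n + 1 : ℕ) : WithBot ℕ) ↔ x ≤ (n : ℕ) := by
  cases x with
  | bot => simp [bot_lt_iff_ne_bot]
  | coe m =>
    simp only [Nat.cast_withBot, WithBot.coe_lt_coe, WithBot.coe_le_coe]
    exact Nat.lt_succ_iff

omit [Fintype F] in
lemma Wset_eq_diff (n : ℕ) : Wset F n = Dset F (n+1) \ Dset F n := by
  ext p
  simp only [Wset, Dset, Set.mem_setOf_eq, Set.mem_diff, not_lt]
  constructor
  · rintro h
    rw [h]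
    exact ⟨by exact_mod_cast WithBot.coe_lt_coe.2 (Nat.lt_succ_self n), le_refl _⟩
  · rintro ⟨h1, h2⟩
    exact le_antisymm (withbot_lt_succ_iff.mp (by exact_mod_cast h1)) h2

lemma card_Wset (n : ℕ) :
    (Wset F n).ncard = (Fintype.card F - 1) * Fintype.card F ^ n := by
  have hsub : Dset F n ⊆ Dset F (n + 1) := by
    intro p hp
    simp only [Dset, Set.mem_setOf_eq] at hp ⊢
    exact lt_of_lt_of_le hp (by exact_mod_cast WithBot.coe_le_coe.2 (Nat.le_succ n))
  rw [Wset_eq_diff, Set.ncard_diff hsub (Dset_finite n), card_Dset, card_Dset,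
    pow_succ, mul_comm (Fintype.card F ^ n), Nat.sub_mul, one_mul, mul_comm]


omit [Fintype F] in
lemma Nset_subset (a b : ℕ) : Nset F a b ⊆ (Dset F (a+1)) ×ˢ (Dset F (b+1)) := by
  rintro ⟨u, v⟩ ⟨h1, _, h3, _⟩
  constructor
  · show u.degree < ((a+1 : ℕ) : WithBot ℕ)
    rw [withbot_lt_succ_iff, h1]
  · show v.degree < ((b+1 : ℕ) : WithBot ℕ)
    rw [withbot_lt_succ_iff]
    exact h3

omit [Fintype F] in
lemma Mset_subset (a c : ℕ) : Mset F a c ⊆ Nset F a c := by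
  rintro ⟨u, v⟩ ⟨h1, h2, h3⟩
  refine ⟨h1, ?_, le_of_eq h2, h3⟩
  intro h
  rw [h, Polynomial.degree_zero] at h2
  exact absurd h2.symm (by simp)

lemma Nset_finite (a b : ℕ) : (Nset F a b).Finite :=
  (Set.Finite.prod (Dset_finite (a+1)) (Dset_finite (b+1))).subset (Nset_subset a b)

lemma Mset_finite (a c : ℕ) : (Mset F a c).Finite :=
  (Nset_finite a c).subset (Mset_subset a c)

omit [Fintype F] in
lemma Nset_zero (a : ℕ) : Nset F a 0 = Mset F a 0 := by
  ext ⟨u, v⟩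
  simp only [Nset, Mset, Set.mem_setOf_eq]
  constructor
  · rintro ⟨h1, h2, h3, h4⟩
    refine ⟨h1, ?_, h4⟩
    rcases Polynomial.degree_eq_natDegree h2 with hd
    rw [hd] at h3 ⊢
    have : v.natDegree = 0 := Nat.le_zero.mp (by exact_mod_cast h3)
    rw [this]
  · rintro ⟨h1, h2, h3⟩
    have hv : v ≠ 0 := fun h => by simp [h] at h2
    exact ⟨h1, hv, le_of_eq h2, h3⟩

omit [Fintype F] in
lemma Nset_succ (a b : ℕ) : Nset F a (b+1) = Nset F a b ∪ Mset F a (b+1) := by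
  ext ⟨u, v⟩
  simp only [Nset, Mset, Set.mem_setOf_eq, Set.mem_union]
  constructor
  · rintro ⟨h1, h2, h3, h4⟩
    rcases lt_or_eq_of_le h3 with h | h
    · exact Or.inl ⟨h1, h2, withbot_lt_succ_iff.mp (by exact_mod_cast h), h4⟩
    · exact Or.inr ⟨h1, h, h4⟩
  · rintro (⟨h1, h2, h3, h4⟩ | ⟨h1, h2, h3⟩)
    · exact ⟨h1, h2, le_trans h3 (by exact_mod_cast WithBot.coe_le_coe.2 (Nat.le_succ b)), h4⟩
    · refine ⟨h1, ?_, le_of_eq h2, h3⟩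
      intro h
      rw [h, Polynomial.degree_zero] at h2
      exact absurd h2.symm (by simp)

omit [Fintype F] in
lemma Nset_disj (a b : ℕ) : Disjoint (Nset F a b) (Mset F a (b+1)) := by
  rw [Set.disjoint_iff]
  rintro ⟨u, v⟩ ⟨⟨_, _, h3, _⟩, ⟨_, h2', _⟩⟩
  rw [h2'] at h3
  exact absurd (by exact_mod_cast h3 : b + 1 ≤ b) (by omega)

lemma ncard_Nset_succ (a b : ℕ) :
    (Nset F a (b+1)).ncard = (Nset F a b).ncard + (Mset F a (b+1)).ncard := by
  rw [Nset_succ, Set.ncard_union_eq (Nset_disj a b) (Nset_finite a b) (Mset_finite a (b+1))]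

omit [Fintype F] in
lemma Mset_swap (a c : ℕ) : Prod.swap '' (Mset F a c) = Mset F c a := by
  ext ⟨u, v⟩
  constructor
  · rintro ⟨⟨x, y⟩, ⟨h1, h2, h3⟩, heq⟩
    rw [Prod.swap_prod_mk, Prod.mk.injEq] at heq
    rcases heq with ⟨hy, hx⟩
    subst hy; subst hx
    exact ⟨h2, h1, h3.symm⟩
  · rintro ⟨h1, h2, h3⟩
    exact ⟨(v, u), ⟨h2, h1, h3.symm⟩, rfl⟩

omit [Fintype F] in
lemma ncard_Mset_swap (a c : ℕ) : (Mset F a c).ncard = (Mset F c a).ncard := by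
  rw [← Mset_swap a c, Set.ncard_image_of_injective _ Prod.swap_injective]

omit [Fintype F] in
lemma Mset_unit (a : ℕ) : Mset F a 0 = (Wset F a) ×ˢ (Wset F 0) := by
  ext ⟨u, v⟩
  simp only [Mset, Wset, Set.mem_setOf_eq, Set.mem_prod]
  constructor
  · rintro ⟨h1, h2, _⟩; exact ⟨h1, h2⟩
  · rintro ⟨h1, h2⟩
    refine ⟨h1, h2, ?_⟩
    have hv : IsUnit v := Polynomial.isUnit_iff_degree_eq_zero.mpr (by exact_mod_cast h2)
    rcases hv.exists_left_inv with ⟨w, hw⟩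
    exact ⟨0, w, by rw [zero_mul, zero_add, hw]⟩

lemma ncard_prod {α β : Type*} (s : Set α) (t : Set β) :
    (s ×ˢ t).ncard = s.ncard * t.ncard := by
  rw [← Nat.card_coe_set_eq, ← Nat.card_coe_set_eq, ← Nat.card_coe_set_eq,
    Nat.card_congr (Equiv.Set.prod s t), Nat.card_prod]

lemma ncard_Mset_unit (a : ℕ) :
    (Mset F a 0).ncard = ((Fintype.card F - 1) * Fintype.card F ^ a) * (Fintype.card F - 1) := by
  rw [Mset_unit, ncard_prod, card_Wset, card_Wset, pow_zero, mul_one]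


omit [Fintype F] in
lemma deg_ne_zero {p : F[X]} {n : ℕ} (h : p.degree = (n : ℕ)) : p ≠ 0 := by
  intro h0
  rw [h0, Polynomial.degree_zero] at h
  exact absurd h (by simp)

omit [Fintype F] in
lemma G_mem (e d : ℕ) (w u r : F[X]) (hw : w ∈ Wset F d) (hur : (u, r) ∈ Nset F (e+1) e) :
    (u, u * w + r) ∈ Mset F (e+1) (e+1+d) := by
  obtain ⟨h1, h2, h3, h4⟩ := hur
  have hw' : w.degree = (d : ℕ) := hw
  have hu : u ≠ 0 := deg_ne_zero h1
  have hwne : w ≠ 0 := deg_ne_zero hw'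
  have hmul : (u * w).degree = ((e + 1 + d : ℕ) : WithBot ℕ) := by
    rw [Polynomial.degree_mul, h1, hw']
    push_cast
    ring
  have hrlt : r.degree < (u * w).degree := by
    rw [hmul]
    calc r.degree ≤ (e : ℕ) := h3
    _ < ((e + 1 + d : ℕ) : WithBot ℕ) := by exact_mod_cast (by omega : e < e + 1 + d)
  refine ⟨h1, ?_, ?_⟩
  · rw [Polynomial.degree_add_eq_left_of_degree_lt hrlt, hmul]
  · have := h4.add_mul_left_right w
    rwa [add_comm r (u * w)] at this

lemma ncard_Mset_div (e d : ℕ) :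
    (Mset F (e+1) (e+1+d)).ncard = (Wset F d).ncard * (Nset F (e+1) e).ncard := by
  classical
  let G : (Wset F d) × (Nset F (e+1) e) → (Mset F (e+1) (e+1+d)) := fun p =>
    ⟨(p.2.1.1, p.2.1.1 * p.1.1 + p.2.1.2), by
      obtain ⟨⟨w, hw⟩, ⟨⟨u, r⟩, hur⟩⟩ := p
      exact G_mem e d w u r hw hur⟩
  have hinj : Function.Injective G := by
    rintro ⟨⟨w, hw⟩, ⟨⟨u, r⟩, hur⟩⟩ ⟨⟨w', hw'⟩, ⟨⟨u', r'⟩, hur'⟩⟩ heq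
    simp only [G, Subtype.mk.injEq, Prod.mk.injEq] at heq
    obtain ⟨hu, hsum⟩ := heq
    subst hu
    have hwq : w = w' := by
      by_contra hne
      have hsub : u * (w - w') = r' - r := by
        have := hsum
        ring_nf
        ring_nf at this
        linear_combination this
      have hne' : w - w' ≠ 0 := sub_ne_zero.mpr hne
      have hdl : ((e+1 : ℕ) : WithBot ℕ) ≤ (u * (w - w')).degree := by
        rw [Polynomial.degree_mul, hur.1]
        calc ((e+1:ℕ) : WithBot ℕ) = ((e+1:ℕ) : WithBot ℕ) + 0 := by rw [add_zero]
        _ ≤ ((e+1:ℕ) : WithBot ℕ) + (w - w').degree := by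
            exact add_le_add_right (Polynomial.zero_le_degree_iff.mpr hne') _
      have hdr : (r' - r).degree ≤ ((e : ℕ) : WithBot ℕ) :=
        le_trans (Polynomial.degree_sub_le r' r) (max_le hur'.2.2.1 hur.2.2.1)
      rw [hsub] at hdl
      have : ((e+1:ℕ) : WithBot ℕ) ≤ ((e:ℕ) : WithBot ℕ) := le_trans hdl hdr
      exact absurd (by exact_mod_cast this : e + 1 ≤ e) (by omega)
    subst hwq
    have hr : r = r' := by
      have := hsum
      exact add_left_cancel this
    subst hr
    rfl
  have hsurj : Function.Surjective G := by
    rintro ⟨⟨u, v⟩, hm⟩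
    obtain ⟨h1, h2, h3⟩ := hm
    dsimp only at h1 h2 h3
    have hu : u ≠ 0 := deg_ne_zero h1
    have hmo : (u * Polynomial.C u.leadingCoeff⁻¹).Monic := Polynomial.monic_mul_leadingCoeff_inv hu
    set u' := u * Polynomial.C u.leadingCoeff⁻¹ with hu'def
    have hdu' : u'.degree = u.degree := Polynomial.degree_mul_leadingCoeff_inv u hu
    set r := v %ₘ u' with hrdef
    set w := Polynomial.C u.leadingCoeff⁻¹ * (v /ₘ u') with hwdef
    have hveq : v = u * w + r := by
      have := Polynomial.modByMonic_add_div v u'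
      calc v = v %ₘ u' + u' * (v /ₘ u') := this.symm
      _ = u * w + r := by rw [hu'def, hwdef]; ring
    have hrlt : r.degree < ((e+1 : ℕ) : WithBot ℕ) := by
      rw [hrdef, ← h1, ← hdu']
      exact Polynomial.degree_modByMonic_lt v hmo
    have hrle : r.degree ≤ ((e : ℕ) : WithBot ℕ) := withbot_lt_succ_iff.mp hrlt
    have hcopr : IsCoprime u r := by
      have h3' : IsCoprime u (u * w + r) := by rwa [← hveq]
      have := h3'.add_mul_left_right (-w)
      have heq : u * w + r + u * -w = r := by ring
      rwa [heq] at this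
    have hrne : r ≠ 0 := by
      intro h0
      rw [h0] at hcopr
      have := Polynomial.degree_eq_zero_of_isUnit (isCoprime_zero_right.mp hcopr)
      rw [h1] at this
      exact absurd (by exact_mod_cast this : e + 1 = 0) (by omega)
    have hwne : w ≠ 0 := by
      intro h0
      rw [h0, mul_zero, zero_add] at hveq
      have : ((e+1+d : ℕ) : WithBot ℕ) ≤ ((e:ℕ) : WithBot ℕ) := by
        rw [← h2, hveq]; exact hrle
      exact absurd (by exact_mod_cast this : e + 1 + d ≤ e) (by omega)
    have hdw : w.degree = (d : ℕ) := by
      have hrlt2 : r.degree < (u * w).degree := by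
        calc r.degree < ((e+1:ℕ) : WithBot ℕ) := hrlt
        _ ≤ (u * w).degree := by
            rw [Polynomial.degree_mul, h1]
            calc ((e+1:ℕ) : WithBot ℕ) = ((e+1:ℕ) : WithBot ℕ) + 0 := by rw [add_zero]
            _ ≤ ((e+1:ℕ) : WithBot ℕ) + w.degree := by
                exact add_le_add_right (Polynomial.zero_le_degree_iff.mpr hwne) _
      have : v.degree = (u * w).degree := by
        rw [hveq, Polynomial.degree_add_eq_left_of_degree_lt hrlt2]
      rw [h2, Polynomial.degree_mul, h1] at this
      rw [Polynomial.degree_eq_natDegree hwne] at this ⊢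
      have h5 : e + 1 + d = e + 1 + w.natDegree := by exact_mod_cast this
      have h6 : w.natDegree = d := by omega
      rw [h6]
    refine ⟨⟨⟨w, hdw⟩, ⟨(u, r), ⟨h1, hrne, hrle, hcopr⟩⟩⟩, Subtype.ext ?_⟩
    show (u, u * w + r) = (u, v)
    rw [← hveq]
  rw [← Nat.card_coe_set_eq, ← Nat.card_coe_set_eq, ← Nat.card_coe_set_eq,
    ← Nat.card_prod]
  exact (Nat.card_congr (Equiv.ofBijective G ⟨hinj, hsurj⟩)).symm


lemma geom_aux (q : ℕ) (hq : 1 ≤ q) (n : ℕ) :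
    (q - 1) * (∑ i ∈ Finset.range n, q ^ i) + 1 = q ^ n := by
  obtain ⟨q', rfl⟩ : ∃ q', q = q' + 1 := ⟨q - 1, by omega⟩
  simp only [Nat.add_sub_cancel]
  induction n with
  | zero => simp
  | succ n ih =>
    rw [Finset.sum_range_succ, Nat.mul_add, pow_succ]
    calc q' * ∑ i ∈ Finset.range n, (q'+1) ^ i + q' * (q'+1)^n + 1
        = (q' * ∑ i ∈ Finset.range n, (q'+1) ^ i + 1) + q' * (q'+1)^n := by ring
      _ = (q'+1)^n + q' * (q'+1)^n := by rw [ih]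
      _ = (q'+1)^n * (q'+1) := by ring

lemma Nsum (a b : ℕ) : (Nset F a b).ncard = ∑ c ∈ Finset.range (b+1), (Mset F a c).ncard := by
  induction b with
  | zero => rw [Nset_zero]; simp
  | succ b ih =>
    rw [ncard_Nset_succ, ih]
    conv_rhs => rw [Finset.sum_range_succ]

lemma Kval (c : ℕ) :
    (Nset F (c+1) c).ncard
      = (Fintype.card F - 1)^2 * Fintype.card F ^ (2*c+1) := by
  induction c using Nat.strong_induction_on with
  | _ c IH =>
    set q := Fintype.card F with hqdef
    have hq : 1 ≤ q := Fintype.card_pos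
    calc (Nset F (c+1) c).ncard
        = ∑ e ∈ Finset.range (c+1), (Mset F (c+1) e).ncard := Nsum _ _
      _ = ∑ e ∈ Finset.range c, (Mset F (c+1) (e+1)).ncard + (Mset F (c+1) 0).ncard :=
          Finset.sum_range_succ' _ c
      _ = ∑ e ∈ Finset.range c, ((q-1)^2*q^(c+1)) * ((q-1) * q^e) + (q-1)^2*q^(c+1) := by
          congr 1
          · refine Finset.sum_congr rfl fun e he => ?_
            rw [Finset.mem_range] at he
            rw [ncard_Mset_swap]
            have hdiv : (Mset F (e+1) (c+1)).ncard
                = (Wset F (c-e)).ncard * (Nset F (e+1) e).ncard := by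
              rw [show c + 1 = e + 1 + (c - e) by omega]
              exact ncard_Mset_div e (c-e)
            rw [hdiv, card_Wset, IH e he]
            have hpow : q^(c-e) * q^(2*e+1) = q^(c+1) * q^e := by
              rw [← pow_add, ← pow_add]
              congr 1
              omega
            calc ((q-1) * q^(c-e)) * ((q-1)^2 * q^(2*e+1))
                = (q-1)^3 * (q^(c-e) * q^(2*e+1)) := by ring
              _ = (q-1)^3 * (q^(c+1) * q^e) := by rw [hpow]
              _ = ((q-1)^2*q^(c+1)) * ((q-1) * q^e) := by ring
          · rw [ncard_Mset_unit]
            ring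
      _ = ((q-1)^2*q^(c+1)) * ((q-1) * ∑ e ∈ Finset.range c, q^e) + (q-1)^2*q^(c+1) := by
          rw [← Finset.mul_sum, ← Finset.mul_sum]
      _ = ((q-1)^2*q^(c+1)) * ((q-1) * (∑ e ∈ Finset.range c, q^e) + 1) := by ring
      _ = ((q-1)^2*q^(c+1)) * q^c := by rw [geom_aux q hq c]
      _ = (q-1)^2 * q^(2*c+1) := by
          rw [mul_assoc, ← pow_add]
          congr 2
          omega

lemma mval_le {a c : ℕ} (hac : a ≤ c) :
    (Mset F (a+1) (c+1)).ncard
      = (Fintype.card F - 1)^3 * Fintype.card F ^ (a+c+1) := by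
  set q := Fintype.card F with hqdef
  have hdiv : (Mset F (a+1) (c+1)).ncard
      = (Wset F (c-a)).ncard * (Nset F (a+1) a).ncard := by
    rw [show c + 1 = a + 1 + (c - a) by omega]
    exact ncard_Mset_div a (c-a)
  rw [hdiv, card_Wset, Kval]
  have hpow : q^(c-a) * q^(2*a+1) = q^(a+c+1) := by
    rw [← pow_add]
    congr 1
    omega
  calc ((q-1) * q^(c-a)) * ((q-1)^2 * q^(2*a+1))
      = (q-1)^3 * (q^(c-a) * q^(2*a+1)) := by ring
    _ = (q-1)^3 * q^(a+c+1) := by rw [hpow]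

lemma mval (a c : ℕ) :
    (Mset F (a+1) (c+1)).ncard
      = (Fintype.card F - 1)^3 * Fintype.card F ^ (a+c+1) := by
  rcases le_or_gt a c with h | h
  · exact mval_le h
  · rw [ncard_Mset_swap, mval_le (le_of_lt h), Nat.add_comm c a]

lemma Nval (a b : ℕ) :
    (Nset F (a+1) b).ncard
      = (Fintype.card F - 1)^2 * Fintype.card F ^ (a+1+b) := by
  set q := Fintype.card F with hqdef
  have hq : 1 ≤ q := Fintype.card_pos
  calc (Nset F (a+1) b).ncard
      = ∑ c ∈ Finset.range (b+1), (Mset F (a+1) c).ncard := Nsum _ _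
    _ = ∑ c ∈ Finset.range b, (Mset F (a+1) (c+1)).ncard + (Mset F (a+1) 0).ncard :=
        Finset.sum_range_succ' _ b
    _ = ∑ c ∈ Finset.range b, ((q-1)^2*q^(a+1)) * ((q-1) * q^c) + (q-1)^2*q^(a+1) := by
        congr 1
        · refine Finset.sum_congr rfl fun c _ => ?_
          rw [mval]
          have hpow : q^(a+c+1) = q^(a+1) * q^c := by
            rw [← pow_add]
            congr 1
            omega
          rw [hpow]
          ring
        · rw [ncard_Mset_unit]
          ring
    _ = ((q-1)^2*q^(a+1)) * ((q-1) * (∑ c ∈ Finset.range b, q^c) + 1) := by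
        rw [← Finset.mul_sum, ← Finset.mul_sum]
        ring
    _ = ((q-1)^2*q^(a+1)) * q^b := by rw [geom_aux q hq b]
    _ = (q-1)^2 * q^(a+1+b) := by
        rw [mul_assoc, ← pow_add]



/-- evaluation at (1, y) -/
noncomputable def toUni : MvPolynomial (Fin 2) F →ₐ[F] Polynomial F :=
  MvPolynomial.aeval ![1, Polynomial.X]

lemma toUni_monomial (m : Fin 2 →₀ ℕ) (c : F) :
    toUni (MvPolynomial.monomial m c) = Polynomial.C c * Polynomial.X ^ (m 1) := by
  rw [toUni, MvPolynomial.aeval_monomial,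
    Finsupp.prod_fintype _ _ (fun i => pow_zero _), Fin.prod_univ_two]
  simp [Polynomial.algebraMap_eq]

lemma toUni_X0 : toUni (MvPolynomial.X 0 : MvPolynomial (Fin 2) F) = 1 := by
  rw [toUni, MvPolynomial.aeval_X]
  rfl

/-- the exponent vector (n - i, i) -/
noncomputable def mu (n i : ℕ) : Fin 2 →₀ ℕ := Finsupp.single 0 (n - i) + Finsupp.single 1 i

lemma mu_apply_zero (n i : ℕ) : (mu n i) 0 = n - i := by
  simp [mu, Finsupp.single_apply]

lemma mu_apply_one (n i : ℕ) : (mu n i) 1 = i := by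
  simp [mu, Finsupp.single_apply]

lemma fin2_eq (m : Fin 2 →₀ ℕ) : m = Finsupp.single 0 (m 0) + Finsupp.single 1 (m 1) := by
  ext i
  fin_cases i <;> simp [Finsupp.single_apply]

lemma degree_fin2 (m : Fin 2 →₀ ℕ) : m.degree = m 0 + m 1 := by
  rw [Finsupp.degree_apply, Finset.sum_subset (Finset.subset_univ _)
    (fun i _ hi => Finsupp.notMem_support_iff.mp hi), Fin.sum_univ_two]

lemma mu_degree {n i : ℕ} (h : i ≤ n) : (mu n i).degree = n := by
  rw [degree_fin2, mu_apply_zero, mu_apply_one]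
  omega

lemma coeff_toUni {n : ℕ} {J : MvPolynomial (Fin 2) F} (hJ : J.IsHomogeneous n) (i : ℕ) :
    (toUni J).coeff i = MvPolynomial.coeff (mu n i) J := by
  conv_lhs => rw [MvPolynomial.as_sum J]
  rw [map_sum, Polynomial.finset_sum_coeff]
  have : ∀ m ∈ J.support,
      (toUni (MvPolynomial.monomial m (MvPolynomial.coeff m J))).coeff i
        = if i = m 1 then MvPolynomial.coeff m J else 0 := by
    intro m _
    rw [toUni_monomial, Polynomial.coeff_C_mul, Polynomial.coeff_X_pow, mul_ite, mul_one, mul_zero]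
  rw [Finset.sum_congr rfl this]
  rw [Finset.sum_eq_single (mu n i)]
  · rw [mu_apply_one, if_pos rfl]
  · intro m hm hne
    rcases eq_or_ne i (m 1) with h | h
    · exfalso
      apply hne
      have hdeg : m.degree = n := by
        have := hJ (MvPolynomial.mem_support_iff.mp hm)
        rw [Finsupp.degree_eq_weight_one]; exact this
      rw [degree_fin2] at hdeg
      conv_lhs => rw [fin2_eq m]
      rw [mu, ← h]
      congr 2
      omega
    · rw [if_neg h]
  · intro hnot
    rw [mu_apply_one, if_pos rfl]
    exact MvPolynomial.notMem_support_iff.mp hnot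

lemma homog_inj {n : ℕ} {J J' : MvPolynomial (Fin 2) F}
    (hJ : J.IsHomogeneous n) (hJ' : J'.IsHomogeneous n) (h : toUni J = toUni J') : J = J' := by
  apply MvPolynomial.ext
  intro m
  rcases eq_or_ne m.degree n with hd | hd
  · have hm : m = mu n (m 1) := by
      have h01 : m 0 + m 1 = n := by rw [← degree_fin2]; exact hd
      conv_lhs => rw [fin2_eq m]
      rw [mu]
      congr 2
      omega
    rw [hm, ← coeff_toUni hJ, ← coeff_toUni hJ', h]
  · rw [hJ.coeff_eq_zero hd, hJ'.coeff_eq_zero hd]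

/-- homogenization of a univariate polynomial, in degree natDegree -/
noncomputable def homExt (u : Polynomial F) : MvPolynomial (Fin 2) F :=
  ∑ i ∈ u.support, MvPolynomial.monomial (mu u.natDegree i) (u.coeff i)

@[simp] lemma homExt_zero : homExt (0 : Polynomial F) = 0 := by
  simp [homExt]

lemma homExt_isHomogeneous (u : Polynomial F) : (homExt u).IsHomogeneous u.natDegree := by
  apply MvPolynomial.IsHomogeneous.sum
  intro i hi
  exact MvPolynomial.isHomogeneous_monomial _
    (mu_degree (Polynomial.le_natDegree_of_ne_zero (Polynomial.mem_support_iff.mp hi)))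

lemma toUni_homExt (u : Polynomial F) : toUni (homExt u) = u := by
  rw [homExt, map_sum]
  conv_rhs => rw [Polynomial.as_sum_support u]
  apply Finset.sum_congr rfl
  intro i _
  rw [toUni_monomial, mu_apply_one, Polynomial.C_mul_X_pow_eq_monomial]

lemma coeff_homExt_top {u : Polynomial F} (hu : u ≠ 0) :
    MvPolynomial.coeff (mu u.natDegree u.natDegree) (homExt u) ≠ 0 := by
  rw [← coeff_toUni (homExt_isHomogeneous u), toUni_homExt]
  exact Polynomial.leadingCoeff_ne_zero.mpr hu

lemma X0_not_dvd_homExt {u : Polynomial F} (hu : u ≠ 0) :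
    ¬ (MvPolynomial.X 0 ∣ homExt u) := by
  rintro ⟨G, hG⟩
  apply coeff_homExt_top hu
  rw [hG, mul_comm, MvPolynomial.coeff_mul_X']
  rw [if_neg]
  intro hmem
  rw [Finsupp.mem_support_iff, mu_apply_zero, Nat.sub_self] at hmem
  exact hmem rfl

lemma natDegree_toUni_le {n : ℕ} {J : MvPolynomial (Fin 2) F} (hJ : J.IsHomogeneous n) :
    (toUni J).natDegree ≤ n := by
  apply Polynomial.natDegree_le_iff_coeff_eq_zero.mpr
  intro i hi
  rw [coeff_toUni hJ]
  apply hJ.coeff_eq_zero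
  rw [degree_fin2, mu_apply_zero, mu_apply_one]
  omega

lemma core {n : ℕ} {J : MvPolynomial (Fin 2) F} (hJ : J.IsHomogeneous n) :
    J = (MvPolynomial.X 0) ^ (n - (toUni J).natDegree) * homExt (toUni J) := by
  have hle : (toUni J).natDegree ≤ n := natDegree_toUni_le hJ
  apply homog_inj hJ
  · have := (MvPolynomial.isHomogeneous_X_pow (R := F) (0 : Fin 2)
      (n - (toUni J).natDegree)).mul (homExt_isHomogeneous (toUni J))
    rwa [show n - (toUni J).natDegree + (toUni J).natDegree = n by omega] at this
  · rw [map_mul, map_pow, toUni_X0, one_pow, one_mul, toUni_homExt]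

lemma homExt_mul {u v : Polynomial F} (hu : u ≠ 0) (hv : v ≠ 0) :
    homExt (u * v) = homExt u * homExt v := by
  apply homog_inj (n := u.natDegree + v.natDegree)
  · have := homExt_isHomogeneous (u * v)
    rwa [Polynomial.natDegree_mul hu hv] at this
  · exact (homExt_isHomogeneous u).mul (homExt_isHomogeneous v)
  · rw [map_mul, toUni_homExt, toUni_homExt, toUni_homExt]

lemma prime_X0 : Prime (MvPolynomial.X 0 : MvPolynomial (Fin 2) F) := by
  rw [← MulEquiv.prime_iff (MvPolynomial.finSuccEquiv F 1)]
  show Prime ((MvPolynomial.finSuccEquiv F 1) (MvPolynomial.X 0))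
  rw [MvPolynomial.finSuccEquiv_X_zero]
  exact Polynomial.prime_X


/-- lifting an additive identity to homogeneous polynomials -/
lemma hom_add_identity {s t u v : Polynomial F} (hst : s * u + t * v = 1) :
    let N := max (s*u).natDegree (t*v).natDegree
    (MvPolynomial.X 0) ^ (N - (s*u).natDegree) * homExt (s*u)
      + (MvPolynomial.X 0) ^ (N - (t*v).natDegree) * homExt (t*v)
      = (MvPolynomial.X 0 : MvPolynomial (Fin 2) F) ^ N := by
  intro N
  have h1 : ((MvPolynomial.X 0 : MvPolynomial (Fin 2) F) ^ (N - (s*u).natDegree)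
      * homExt (s*u)).IsHomogeneous N := by
    have := (MvPolynomial.isHomogeneous_X_pow (R := F) (0 : Fin 2)
      (N - (s*u).natDegree)).mul (homExt_isHomogeneous (s*u))
    rwa [show N - (s*u).natDegree + (s*u).natDegree = N by
      have := le_max_left (s*u).natDegree (t*v).natDegree; omega] at this
  have h2 : ((MvPolynomial.X 0 : MvPolynomial (Fin 2) F) ^ (N - (t*v).natDegree)
      * homExt (t*v)).IsHomogeneous N := by
    have := (MvPolynomial.isHomogeneous_X_pow (R := F) (0 : Fin 2)
      (N - (t*v).natDegree)).mul (homExt_isHomogeneous (t*v))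
    rwa [show N - (t*v).natDegree + (t*v).natDegree = N by
      have := le_max_right (s*u).natDegree (t*v).natDegree; omega] at this
  apply homog_inj (h1.add h2) (MvPolynomial.isHomogeneous_X_pow _ _)
  simp only [map_add, map_mul, map_pow, toUni_X0, one_pow, one_mul, toUni_homExt]
  exact hst

lemma relPrime_of_coprime {b : ℕ} {u v : Polynomial F} (hu : u ≠ 0) (hv : v ≠ 0)
    (hcop : IsCoprime u v) :
    IsRelPrime (homExt u) ((MvPolynomial.X 0) ^ (b - v.natDegree) * homExt v) := by
  intro D hD1 hD2
  obtain ⟨s, t, hst⟩ := hcop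
  set e := b - v.natDegree with hedef
  set N := max (s*u).natDegree (t*v).natDegree with hNdef
  have hkey := hom_add_identity hst
  simp only at hkey
  -- D divides X0^e * (first term)
  have hd1 : D ∣ (MvPolynomial.X 0) ^ e
      * ((MvPolynomial.X 0) ^ (N - (s*u).natDegree) * homExt (s*u)) := by
    rcases eq_or_ne s 0 with rfl | hs
    · rw [zero_mul, homExt_zero, mul_zero, mul_zero]
      exact dvd_zero D
    · rw [homExt_mul hs hu]
      calc D ∣ homExt u := hD1
      _ ∣ (MvPolynomial.X 0) ^ e * ((MvPolynomial.X 0) ^ (N - (s*u).natDegree)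
          * (homExt s * homExt u)) :=
        ⟨(MvPolynomial.X 0) ^ e * ((MvPolynomial.X 0) ^ (N - (s*u).natDegree) * homExt s),
          by ring⟩
  have hd2 : D ∣ (MvPolynomial.X 0) ^ e
      * ((MvPolynomial.X 0) ^ (N - (t*v).natDegree) * homExt (t*v)) := by
    rcases eq_or_ne t 0 with rfl | ht
    · rw [zero_mul, homExt_zero, mul_zero, mul_zero]
      exact dvd_zero D
    · rw [homExt_mul ht hv]
      have : D ∣ (MvPolynomial.X 0) ^ e * homExt v := hD2
      calc D ∣ (MvPolynomial.X 0) ^ e * homExt v := this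
      _ ∣ (MvPolynomial.X 0) ^ e * ((MvPolynomial.X 0) ^ (N - (t*v).natDegree)
          * (homExt t * homExt v)) := ⟨(MvPolynomial.X 0) ^ (N - (t*v).natDegree) * homExt t,
          by ring⟩
  have hdX : D ∣ (MvPolynomial.X 0 : MvPolynomial (Fin 2) F) ^ (e + N) := by
    have : D ∣ (MvPolynomial.X 0) ^ e
        * ((MvPolynomial.X 0) ^ (N - (s*u).natDegree) * homExt (s*u))
        + (MvPolynomial.X 0) ^ e
        * ((MvPolynomial.X 0) ^ (N - (t*v).natDegree) * homExt (t*v)) :=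
      dvd_add hd1 hd2
    rwa [← mul_add, hkey, ← pow_add] at this
  obtain ⟨i, _, hassoc⟩ := (dvd_prime_pow prime_X0 (e + N)).mp hdX
  match i with
  | 0 =>
    rw [pow_zero] at hassoc
    exact associated_one_iff_isUnit.mp hassoc
  | (i+1) =>
    exfalso
    apply X0_not_dvd_homExt hu
    exact dvd_trans (dvd_trans (dvd_pow_self _ (Nat.succ_ne_zero i)) hassoc.symm.dvd) hD1


lemma toUni_ne_zero {n : ℕ} {J : MvPolynomial (Fin 2) F} (hJ : J.IsHomogeneous n)
    (hJ0 : J ≠ 0) : toUni J ≠ 0 := fun h =>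
  hJ0 (by rw [core hJ, h, homExt_zero, mul_zero])

lemma sub_natDegree_eq_zero {n : ℕ} {J : MvPolynomial (Fin 2) F} (hJ : J.IsHomogeneous n)
    (hX : ¬ (MvPolynomial.X 0 ∣ J)) : n - (toUni J).natDegree = 0 := by
  by_contra h
  apply hX
  calc (MvPolynomial.X 0 : MvPolynomial (Fin 2) F)
      ∣ (MvPolynomial.X 0) ^ (n - (toUni J).natDegree) := dvd_pow_self _ h
  _ ∣ J := by
      conv_rhs => rw [core hJ]
      exact dvd_mul_right _ _

lemma homExt_toUni_eq {n : ℕ} {J : MvPolynomial (Fin 2) F} (hJ : J.IsHomogeneous n)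
    (hX : ¬ (MvPolynomial.X 0 ∣ J)) : homExt (toUni J) = J := by
  conv_rhs => rw [core hJ]
  rw [sub_natDegree_eq_zero hJ hX, pow_zero, one_mul]

lemma natDegree_toUni_eq {n : ℕ} {J : MvPolynomial (Fin 2) F} (hJ : J.IsHomogeneous n)
    (hJ0 : J ≠ 0) (hX : ¬ (MvPolynomial.X 0 ∣ J)) : (toUni J).natDegree = n := by
  have h1 := natDegree_toUni_le hJ
  have h2 := sub_natDegree_eq_zero hJ hX
  rcases Nat.lt_or_ge (toUni J).natDegree n with h | h
  · omega
  · omega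

lemma coprime_of_relPrime {a b : ℕ} {J L : MvPolynomial (Fin 2) F}
    (hJ : J.IsHomogeneous a) (hL : L.IsHomogeneous b) (hJ0 : J ≠ 0) (hL0 : L ≠ 0)
    (hrel : IsRelPrime J L) (hX : ¬ (MvPolynomial.X 0 ∣ J)) :
    IsCoprime (toUni J) (toUni L) := by
  have hu0 : toUni J ≠ 0 := toUni_ne_zero hJ hJ0
  have hv0 : toUni L ≠ 0 := toUni_ne_zero hL hL0
  have hrp : IsRelPrime (toUni J) (toUni L) := by
    intro d hdu hdv
    rcases eq_or_ne d 0 with rfl | hd0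
    · exact absurd (zero_dvd_iff.mp hdu) hu0
    obtain ⟨w, hw⟩ := hdu
    obtain ⟨z, hz⟩ := hdv
    have hw0 : w ≠ 0 := fun h => hu0 (by rw [hw, h, mul_zero])
    have hz0 : z ≠ 0 := fun h => hv0 (by rw [hz, h, mul_zero])
    have hdJ : homExt d ∣ J := by
      rw [← homExt_toUni_eq hJ hX, hw, homExt_mul hd0 hw0]
      exact Dvd.intro _ rfl
    have hfac : homExt (toUni L) = homExt d * homExt z := by
      rw [hz]; exact homExt_mul hd0 hz0
    have hdL : homExt d ∣ L := by
      conv_rhs => rw [core hL]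
      exact Dvd.dvd.mul_left ⟨homExt z, hfac⟩ _
    have := hrel hdJ hdL
    have := this.map toUni
    rwa [toUni_homExt] at this
  exact hrp.isCoprime

end WplAux


open WplAux in
lemma wplT_card_eq (F : Type*) [Field F] [Fintype F] (a b : ℕ) :
    (wplT F a b).ncard = (WplAux.Nset F a b).ncard := by
  classical
  rw [← Nat.card_coe_set_eq, ← Nat.card_coe_set_eq]
  apply Nat.card_congr
  have fwd : ∀ p : MvPolynomial (Fin 2) F × MvPolynomial (Fin 2) F, p ∈ wplT F a b →
      (toUni p.1, toUni p.2) ∈ WplAux.Nset F a b := by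
    rintro ⟨J, L⟩ ⟨hJ0, hL0, hJh, hLh, hrel, hX⟩
    have hu0 : toUni J ≠ 0 := toUni_ne_zero hJh hJ0
    refine ⟨?_, toUni_ne_zero hLh hL0, ?_, coprime_of_relPrime hJh hLh hJ0 hL0 hrel hX⟩
    · rw [Polynomial.degree_eq_natDegree hu0, natDegree_toUni_eq hJh hJ0 hX]
    · calc (toUni L).degree ≤ ((toUni L).natDegree : WithBot ℕ) :=
          Polynomial.degree_le_natDegree
      _ ≤ ((b : ℕ) : WithBot ℕ) := by exact_mod_cast natDegree_toUni_le hLh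
  have bwd : ∀ p : Polynomial F × Polynomial F, p ∈ WplAux.Nset F a b →
      (homExt p.1, (MvPolynomial.X 0) ^ (b - p.2.natDegree) * homExt p.2) ∈ wplT F a b := by
    rintro ⟨u, v⟩ ⟨h1, h2, h3, h4⟩
    have hu0 : u ≠ 0 := deg_ne_zero h1
    have hdvb : v.natDegree ≤ b := Polynomial.natDegree_le_iff_degree_le.mpr h3
    refine ⟨?_, ?_, ?_, ?_, ?_, ?_⟩
    · intro h
      dsimp only at h
      apply hu0
      rw [← toUni_homExt u, h, map_zero]
    · intro h
      dsimp only at h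
      apply h2
      have := congrArg toUni h
      rwa [map_mul, map_pow, toUni_X0, one_pow, one_mul, toUni_homExt, map_zero] at this
    · have := homExt_isHomogeneous u
      rwa [Polynomial.natDegree_eq_of_degree_eq_some h1] at this
    · have := (MvPolynomial.isHomogeneous_X_pow (R := F) (0 : Fin 2) (b - v.natDegree)).mul
        (homExt_isHomogeneous v)
      rwa [show b - v.natDegree + v.natDegree = b by omega] at this
    · exact relPrime_of_coprime hu0 h2 h4
    · exact X0_not_dvd_homExt hu0
  refine Equiv.mk (fun p => ⟨(toUni p.1.1, toUni p.1.2), fwd p.1 p.2⟩)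
    (fun p => ⟨(homExt p.1.1, (MvPolynomial.X 0) ^ (b - p.1.2.natDegree) * homExt p.1.2),
      bwd p.1 p.2⟩) ?_ ?_
  · rintro ⟨⟨J, L⟩, hm⟩
    obtain ⟨hJ0, hL0, hJh, hLh, hrel, hX⟩ := hm
    apply Subtype.ext
    show (homExt (toUni J),
      (MvPolynomial.X 0) ^ (b - (toUni L).natDegree) * homExt (toUni L)) = (J, L)
    rw [homExt_toUni_eq hJh hX, ← core hLh]
  · rintro ⟨⟨u, v⟩, hm⟩
    apply Subtype.ext
    show (toUni (homExt u),
      toUni ((MvPolynomial.X 0) ^ (b - v.natDegree) * homExt v)) = (u, v)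
    rw [toUni_homExt, map_mul, map_pow, toUni_X0, one_pow, one_mul, toUni_homExt]


/-- For `a ≥ 2` and `1 ≤ k ≤ a - 1` one has `t(a,b) = t(a-k, b+k)`. -/


theorem wplT_ncard_shift (F : Type*) [Field F] [Fintype F]
    (a b k : ℕ) (ha : 2 ≤ a) (hk1 : 1 ≤ k) (hk2 : k ≤ a - 1) :
    (wplT F a b).ncard = (wplT F (a - k) (b + k)).ncard := by
  rw [wplT_card_eq, wplT_card_eq]
  have hL := WplAux.Nval (F := F) (a - 1) b
  rw [show a - 1 + 1 = a by omega] at hL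
  have hR := WplAux.Nval (F := F) (a - k - 1) (b + k)
  rw [show a - k - 1 + 1 = a - k by omega] at hR
  rw [hL, hR]
  have hexp : a + b = a - k + (b + k) := by omega
  rw [hexp]
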